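/- Let (L_α)_{α<κ} be an inverse system of complete lattices with locally completely additive projections h^α_β, and limit L_∞. Let L be a complete lattice with a cone of locally completely additive projections g_α : L → L_α with corresponding embeddings f_α : L_α → L. Then the mediating map g : L → L_∞, y ↦ (g_α(y))_α, is a projection, and its corresponding embedding f : L_∞ → L is given by f((x_α)_α) = ⨆_{α<κ} f_α(x_α). In particular, for every compatible sequence (x_α)_α, ⨅{y ∈ L : ∀α, x_α ≤ g_α(y)} = ⨆_{α<κ} f_α(x_α). -/

import Mathlib

universe u

abbrev Idx (κ : Ordinal) := {α : Ordinal // α < κ}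

def Compat {κ : Ordinal} (L : Idx κ → Type u) [∀ α, CompleteLattice (L α)]
    (h : ∀ α β : Idx κ, β < α → L α → L β) : Set (∀ α, L α) :=
  {x | ∀ (α β : Idx κ) (hβα : β < α), h α β hβα (x α) = x β}

/-- given a cone of locally completely additive projections
g_α : LL → L_α (with embeddings f_α) over an inverse system with locally completely
additive projections, the mediating map g : LL → L_∞ is a projection whose embedding
is f((x_α)_α) = ⨆_α f_α (x_α); in particular
⨅ {y : ∀ α, x_α ≤ g_α y} = ⨆_α f_α (x_α) for every compatible sequence. -/
theorem mediating_projection_of_lca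
    {κ : Ordinal} (hκ : Order.IsSuccLimit κ)
    (L : Idx κ → Type u) [∀ α, CompleteLattice (L α)]
    (h : ∀ α β : Idx κ, β < α → L α → L β)
    (proj : ∀ (α β : Idx κ) (hβα : β < α), ∃ k : L β → L α,
        Monotone (h α β hβα) ∧ Monotone k ∧
        (∀ x, h α β hβα (k x) = x) ∧ (∀ y, k (h α β hβα y) ≤ y))
    (comp : ∀ (α β γ : Idx κ) (hγβ : γ < β) (hβα : β < α) (x : L α),
        h β γ hγβ (h α β hβα x) = h α γ (hγβ.trans hβα) x)
    (lca : ∀ (α β : Idx κ) (hβα : β < α), ∀ Y : Set (L α), Y.Nonempty →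
        ∀ x : L β, (∀ y ∈ Y, h α β hβα y = x) → h α β hβα (sSup Y) = x)
    (LL : Type u) [CompleteLattice LL]
    (g : ∀ α : Idx κ, LL → L α) (f : ∀ α : Idx κ, L α → LL)
    (gmono : ∀ α, Monotone (g α)) (fmono : ∀ α, Monotone (f α))
    (gf : ∀ α (x : L α), g α (f α x) = x) (fg : ∀ α (y : LL), f α (g α y) ≤ y)
    (glca : ∀ α : Idx κ, ∀ Y : Set LL, Y.Nonempty →
        ∀ x : L α, (∀ y ∈ Y, g α y = x) → g α (sSup Y) = x)
    (cone : ∀ (α β : Idx κ) (hβα : β < α) (y : LL), h α β hβα (g α y) = g β y) :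
    (∀ y : LL, (fun α => g α y) ∈ Compat L h) ∧
    Monotone (fun (y : LL) (α : Idx κ) => g α y) ∧
    (∀ x ∈ Compat L h, ∀ x' ∈ Compat L h, x ≤ x' →
        (⨆ γ : Idx κ, f γ (x γ)) ≤ ⨆ γ : Idx κ, f γ (x' γ)) ∧
    (∀ x ∈ Compat L h, ∀ α : Idx κ, g α (⨆ γ : Idx κ, f γ (x γ)) = x α) ∧
    (∀ y : LL, (⨆ γ : Idx κ, f γ (g γ y)) ≤ y) ∧
    (∀ x ∈ Compat L h,
        sInf {y : LL | ∀ α : Idx κ, x α ≤ g α y} = ⨆ γ : Idx κ, f γ (x γ)) := by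
  have key : ∀ x ∈ Compat L h, ∀ α : Idx κ, g α (⨆ γ : Idx κ, f γ (x γ)) = x α := by
    intro x hx α
    have hle : ∀ γ : Idx κ, γ < α → f γ (x γ) ≤ f α (x α) := by
      intro γ hγ
      have hxg : g γ (f α (x α)) = x γ := by
        rw [← cone α γ hγ, gf]; exact hx α γ hγ
      calc f γ (x γ) = f γ (g γ (f α (x α))) := by rw [hxg]
        _ ≤ f α (x α) := fg γ _
    have hsup : (⨆ γ : Idx κ, f γ (x γ)) =
        sSup ((fun γ => f γ (x γ)) '' {γ | α ≤ γ}) := by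
      apply le_antisymm
      · apply iSup_le; intro γ
        rcases le_or_gt α γ with hc | hc
        · exact le_sSup ⟨γ, hc, rfl⟩
        · exact (hle γ hc).trans (le_sSup ⟨α, le_refl α, rfl⟩)
      · apply sSup_le; rintro _ ⟨γ, _, rfl⟩
        exact le_iSup (fun γ : Idx κ => f γ (x γ)) γ
    rw [hsup]
    refine glca α ((fun γ => f γ (x γ)) '' {γ : Idx κ | α ≤ γ}) ⟨f α (x α), α, le_refl α, rfl⟩ (x α) ?_
    rintro _ ⟨γ, hγ, rfl⟩
    rcases eq_or_lt_of_le (show α ≤ γ from hγ) with heq | hlt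
    · rw [← heq]; exact gf α (x α)
    · rw [← cone γ α hlt, gf]; exact hx γ α hlt
  refine ⟨?_, ?_, ?_, key, ?_, ?_⟩
  · intro y α β hβα; exact cone α β hβα y
  · intro y y' hy α; exact gmono α hy
  · intro x _ x' _ hxx'
    exact iSup_mono fun γ => fmono γ (hxx' γ)
  · intro y; exact iSup_le fun γ => fg γ y
  · intro x hx
    apply le_antisymm
    · apply sInf_le; intro α; rw [key x hx α]
    · apply le_sInf; intro y hy
      exact iSup_le fun γ => (fmono γ (hy γ)).trans (fg γ y)
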